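/- There exists a homogeneous polynomial S ∈ ℂ[x,y,z] of degree d such that P − Q = (x − y)·S; in particular the fiber of F over the value 1 is reducible. -/

import Mathlib

open MvPolynomial

/-- The linear form `R_k = (2d+1-k)x + ky - k(2d+1-k)z` in `ℂ[x,y,z]`. -/
noncomputable def R3 (d k : ℕ) : MvPolynomial (Fin 3) ℂ :=
  C (2*(d:ℂ)+1-(k:ℂ)) * X 0 + C (k:ℂ) * X 1 - C ((k:ℂ)*(2*(d:ℂ)+1-(k:ℂ))) * X 2

/-- `P = ∏_{k=0}^{d} R_k`. -/
noncomputable def P3 (d : ℕ) : MvPolynomial (Fin 3) ℂ :=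
  ∏ k ∈ Finset.range (d+1), R3 d k

/-- `Q = ∏_{k=d+1}^{2d+1} R_k`. -/
noncomputable def Q3 (d : ℕ) : MvPolynomial (Fin 3) ℂ :=
  ∏ k ∈ Finset.Icc (d+1) (2*d+1), R3 d k

/-- substitution `x ↦ x, y ↦ x, z ↦ y` -/
noncomputable def psi3 : MvPolynomial (Fin 3) ℂ →+* MvPolynomial (Fin 2) ℂ :=
  (Polynomial.evalRingHom (X 0)).comp (finSuccEquiv ℂ 2 : MvPolynomial (Fin 3) ℂ →+* _)

lemma psi3_R3 (d j : ℕ) : psi3 (R3 d j)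
    = C (2*(d:ℂ)+1-(j:ℂ)) * X 0 + C (j:ℂ) * X 0 - C ((j:ℂ)*(2*(d:ℂ)+1-(j:ℂ))) * X 1 := by
  have c1 : (Fin.cases Polynomial.X (fun k => Polynomial.C (X k)) (1:Fin 3) :
      Polynomial (MvPolynomial (Fin 2) ℂ)) = Polynomial.C (X 0) := rfl
  have c2 : (Fin.cases Polynomial.X (fun k => Polynomial.C (X k)) (2:Fin 3) :
      Polynomial (MvPolynomial (Fin 2) ℂ)) = Polynomial.C (X 1) := rfl
  simp [psi3, R3, finSuccEquiv_apply, c1, c2]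

lemma R3_homog (d k : ℕ) : (R3 d k).IsHomogeneous 1 := by
  unfold R3
  apply MvPolynomial.IsHomogeneous.sub
  · exact (isHomogeneous_C_mul_X _ _).add (isHomogeneous_C_mul_X _ _)
  · exact isHomogeneous_C_mul_X _ _

lemma psi3_P3_eq_Q3 (d : ℕ) : psi3 (P3 d) = psi3 (Q3 d) := by
  unfold P3 Q3
  rw [map_prod, map_prod]
  refine Finset.prod_nbij' (fun k => 2*d+1-k) (fun k => 2*d+1-k) ?_ ?_ ?_ ?_ ?_
  · intro a ha
    simp only [Finset.mem_range] at ha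
    simp only [Finset.mem_Icc]
    omega
  · intro a ha
    simp only [Finset.mem_Icc] at ha
    simp only [Finset.mem_range]
    omega
  · intro a ha; simp only [Finset.mem_range] at ha
    show 2*d+1-(2*d+1-a) = a; omega
  · intro a ha; simp only [Finset.mem_Icc] at ha
    show 2*d+1-(2*d+1-a) = a; omega
  · intro a ha
    simp only [Finset.mem_range] at ha
    rw [psi3_R3, psi3_R3]
    have hc : ((2*d+1-a : ℕ) : ℂ) = 2*(d:ℂ)+1-(a:ℂ) := by
      rw [Nat.cast_sub (by omega)]
      push_cast
      ring
    rw [hc]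
    ring_nf

/-- There is a homogeneous polynomial `S` of degree `d` with `P - Q = (x - y)·S`;
in particular the fiber of `F = P/Q` over `1` is reducible. -/
theorem stmt8 (d : ℕ) (hd : 1 ≤ d) :
    ∃ S : MvPolynomial (Fin 3) ℂ, S.IsHomogeneous d ∧
      P3 d - Q3 d = (X 0 - X 1) * S := by
  set f := P3 d - Q3 d with hf
  -- homogeneity of f
  have hP : (P3 d).IsHomogeneous (d+1) := by
    have := IsHomogeneous.prod (Finset.range (d+1)) (R3 d) (fun _ => 1)
      (fun k _ => R3_homog d k)
    simpa [P3] using this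
  have hQ : (Q3 d).IsHomogeneous (d+1) := by
    have := IsHomogeneous.prod (Finset.Icc (d+1) (2*d+1)) (R3 d) (fun _ => 1)
      (fun k _ => R3_homog d k)
    have hcard : ∑ _k ∈ Finset.Icc (d+1) (2*d+1), 1 = d+1 := by
      rw [Finset.sum_const, smul_eq_mul, mul_one, Nat.card_Icc]
      omega
    rwa [hcard] at this
  have hfh : f.IsHomogeneous (d+1) := hP.sub hQ
  -- divisibility by X 0 - X 1
  have hroot : (finSuccEquiv ℂ 2 f).IsRoot (X 0) := by
    have : psi3 f = 0 := by
      rw [hf, map_sub, psi3_P3_eq_Q3, sub_self]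
    simpa [psi3, Polynomial.IsRoot] using this
  obtain ⟨q, hq⟩ := (Polynomial.dvd_iff_isRoot).2 hroot
  set T : MvPolynomial (Fin 3) ℂ := (finSuccEquiv ℂ 2).symm q with hT
  have hfT : f = (X 0 - X 1) * T := by
    apply (finSuccEquiv ℂ 2).injective
    rw [map_mul, hq, hT, AlgEquiv.apply_symm_apply, map_sub, finSuccEquiv_X_zero]
    have : (X 1 : MvPolynomial (Fin 3) ℂ) = X (0:Fin 2).succ := rfl
    rw [this, finSuccEquiv_X_succ]
  -- extract homogeneous component
  refine ⟨homogeneousComponent d T, homogeneousComponent_isHomogeneous d T, ?_⟩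
  have hXY : (X 0 - X 1 : MvPolynomial (Fin 3) ℂ).IsHomogeneous 1 :=
    (isHomogeneous_X _ _).sub (isHomogeneous_X _ _)
  have key : homogeneousComponent (d+1) f = (X 0 - X 1) * homogeneousComponent d T := by
    conv_lhs => rw [hfT, ← sum_homogeneousComponent T, Finset.mul_sum, map_sum]
    have step : ∀ i ∈ Finset.range (T.totalDegree + 1),
        homogeneousComponent (d+1) ((X 0 - X 1) * homogeneousComponent i T)
          = if i = d then (X 0 - X 1) * homogeneousComponent i T else 0 := by
      intro i _
      have hh : ((X 0 - X 1) * homogeneousComponent i T).IsHomogeneous (1 + i) :=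
        hXY.mul (homogeneousComponent_isHomogeneous i T)
      rw [homogeneousComponent_of_mem hh]
      by_cases h : i = d
      · subst h; rw [if_pos (by omega), if_pos rfl]
      · rw [if_neg (by omega), if_neg h]
    rw [Finset.sum_congr rfl step, Finset.sum_ite_eq' (Finset.range (T.totalDegree+1))]
    by_cases hmem : d ∈ Finset.range (T.totalDegree + 1)
    · simp [hmem]
    · have : T.totalDegree < d := by
        simp only [Finset.mem_range] at hmem; omega
      rw [if_neg hmem, homogeneousComponent_eq_zero _ _ this, mul_zero]
  rw [← key, homogeneousComponent_of_mem hfh, if_pos rfl]
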